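/- Let n ≥ 1, l ≥ 1 with 2l < n, and let S = {α ∈ ℤ^n : α_{2l+1} + ∑_{i=1}^{l} α_{2i-1}·α_{2i} ≡ 0 (mod 2)}. Then the set Σ(S) of saturated elements of S equals Λ^{(2l+1)} = {α ∈ ℤ^n : α_i is even for all i ≤ 2l+1}. -/
import Mathlib


/-- The set of saturated elements of a subset `S` of an additive group. -/
def saturated {Λ : Type*} [AddCommGroup Λ] (S : Set Λ) : Set Λ :=
  {γ ∈ S | ∀ σ ∈ S, γ + σ ∈ S}

theorem stmt_13 (n l : ℕ) (hn : 1 ≤ n) (hl : 1 ≤ l) (h2l : 2 * l < n) :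
    saturated {α : Fin n → ℤ |
        Even (α ⟨2 * l, h2l⟩ + ∑ i : Fin l,
          α ⟨2 * i.val, by have := i.isLt; omega⟩ *
          α ⟨2 * i.val + 1, by have := i.isLt; omega⟩)}
      = {α : Fin n → ℤ | ∀ i : Fin n, i.val < 2 * l + 1 → (2 : ℤ) ∣ α i} := by
  ext α
  simp only [saturated, Set.mem_setOf_eq, Set.mem_sep_iff]
  constructor
  · rintro ⟨hα, hsat⟩
    -- even-position coordinates
    have heven : ∀ k : ℕ, (hk : k < l) → (2 : ℤ) ∣ α ⟨2 * k, by omega⟩ := by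
      intro k hk
      set σ : Fin n → ℤ := fun m => if m.val = 2 * k + 1 then 1 else 0 with hσdef
      have hσ0 : ∀ m : Fin n, m.val ≠ 2 * k + 1 → σ m = 0 := fun m h => if_neg h
      have hσ1 : ∀ m : Fin n, m.val = 2 * k + 1 → σ m = 1 := fun m h => if_pos h
      have hσmem : Even (σ ⟨2 * l, h2l⟩ + ∑ i : Fin l,
          σ ⟨2 * i.val, by have := i.isLt; omega⟩ *
          σ ⟨2 * i.val + 1, by have := i.isLt; omega⟩) := by
        rw [hσ0 _ (by simp; try omega)]
        rw [Finset.sum_congr rfl (fun i _ => by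
          rw [hσ0 ⟨2 * i.val, by have := i.isLt; omega⟩ (by simp; try omega), zero_mul])]
        simp
      have hcross := hsat σ hσmem
      simp only [Pi.add_apply] at hcross
      have hsum : ∑ i : Fin l,
          (α ⟨2 * i.val, by have := i.isLt; omega⟩ + σ ⟨2 * i.val, by have := i.isLt; omega⟩) *
          (α ⟨2 * i.val + 1, by have := i.isLt; omega⟩ + σ ⟨2 * i.val + 1, by have := i.isLt; omega⟩)
          = (∑ i : Fin l,
              α ⟨2 * i.val, by have := i.isLt; omega⟩ *
              α ⟨2 * i.val + 1, by have := i.isLt; omega⟩) + α ⟨2 * k, by omega⟩ := by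
        rw [Finset.sum_congr rfl (fun i _ => by
          rw [hσ0 ⟨2 * i.val, by have := i.isLt; omega⟩ (by simp; try omega)]
          try rfl)]
        rw [Finset.sum_congr rfl (fun i _ => show
            (α ⟨2 * i.val, by have := i.isLt; omega⟩ + 0) *
            (α ⟨2 * i.val + 1, by have := i.isLt; omega⟩ + σ ⟨2 * i.val + 1, by have := i.isLt; omega⟩)
            = α ⟨2 * i.val, by have := i.isLt; omega⟩ * α ⟨2 * i.val + 1, by have := i.isLt; omega⟩
              + (if i = (⟨k, hk⟩ : Fin l) then α ⟨2 * i.val, by have := i.isLt; omega⟩ else 0)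
          from by
            by_cases h : i = (⟨k, hk⟩ : Fin l)
            · subst h
              rw [hσ1 _ (by simp), if_pos rfl]; all_goals ring
            · have hik : i.val ≠ k := fun hq => h (Fin.ext hq)
              rw [hσ0 ⟨2 * i.val + 1, by have := i.isLt; omega⟩ (by simp; try omega), if_neg h]
              all_goals ring)]
        rw [Finset.sum_add_distrib, Finset.sum_ite_eq' Finset.univ (⟨k, hk⟩ : Fin l)
          (fun i => α ⟨2 * i.val, by have := i.isLt; omega⟩)]
        simp
      rw [hσ0 ⟨2 * l, h2l⟩ (by simp; try omega), hsum] at hcross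
      rw [even_iff_two_dvd] at hα hcross
      obtain ⟨a, ha⟩ := hα
      obtain ⟨b, hb⟩ := hcross
      omega
    -- odd-position coordinates
    have hodd : ∀ k : ℕ, (hk : k < l) → (2 : ℤ) ∣ α ⟨2 * k + 1, by omega⟩ := by
      intro k hk
      set σ : Fin n → ℤ := fun m => if m.val = 2 * k then 1 else 0 with hσdef
      have hσ0 : ∀ m : Fin n, m.val ≠ 2 * k → σ m = 0 := fun m h => if_neg h
      have hσ1 : ∀ m : Fin n, m.val = 2 * k → σ m = 1 := fun m h => if_pos h
      have hσmem : Even (σ ⟨2 * l, h2l⟩ + ∑ i : Fin l,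
          σ ⟨2 * i.val, by have := i.isLt; omega⟩ *
          σ ⟨2 * i.val + 1, by have := i.isLt; omega⟩) := by
        rw [hσ0 _ (by simp; try omega)]
        rw [Finset.sum_congr rfl (fun i _ => by
          rw [hσ0 ⟨2 * i.val + 1, by have := i.isLt; omega⟩ (by simp; try omega), mul_zero])]
        simp
      have hcross := hsat σ hσmem
      simp only [Pi.add_apply] at hcross
      have hsum : ∑ i : Fin l,
          (α ⟨2 * i.val, by have := i.isLt; omega⟩ + σ ⟨2 * i.val, by have := i.isLt; omega⟩) *
          (α ⟨2 * i.val + 1, by have := i.isLt; omega⟩ + σ ⟨2 * i.val + 1, by have := i.isLt; omega⟩)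
          = (∑ i : Fin l,
              α ⟨2 * i.val, by have := i.isLt; omega⟩ *
              α ⟨2 * i.val + 1, by have := i.isLt; omega⟩) + α ⟨2 * k + 1, by omega⟩ := by
        rw [Finset.sum_congr rfl (fun i _ => by
          rw [hσ0 ⟨2 * i.val + 1, by have := i.isLt; omega⟩ (by simp; try omega)]
          try rfl)]
        rw [Finset.sum_congr rfl (fun i _ => show
            (α ⟨2 * i.val, by have := i.isLt; omega⟩ + σ ⟨2 * i.val, by have := i.isLt; omega⟩) *
            (α ⟨2 * i.val + 1, by have := i.isLt; omega⟩ + 0)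
            = α ⟨2 * i.val, by have := i.isLt; omega⟩ * α ⟨2 * i.val + 1, by have := i.isLt; omega⟩
              + (if i = (⟨k, hk⟩ : Fin l) then α ⟨2 * i.val + 1, by have := i.isLt; omega⟩ else 0)
          from by
            by_cases h : i = (⟨k, hk⟩ : Fin l)
            · subst h
              rw [hσ1 _ (by simp), if_pos rfl]; all_goals ring
            · have hik : i.val ≠ k := fun hq => h (Fin.ext hq)
              rw [hσ0 ⟨2 * i.val, by have := i.isLt; omega⟩ (by simp; try omega), if_neg h]
              all_goals ring)]
        rw [Finset.sum_add_distrib, Finset.sum_ite_eq' Finset.univ (⟨k, hk⟩ : Fin l)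
          (fun i => α ⟨2 * i.val + 1, by have := i.isLt; omega⟩)]
        simp
      rw [hσ0 ⟨2 * l, h2l⟩ (by simp; try omega), hsum] at hcross
      rw [even_iff_two_dvd] at hα hcross
      obtain ⟨a, ha⟩ := hα
      obtain ⟨b, hb⟩ := hcross
      omega
    -- position 2l
    have h2lcoord : (2 : ℤ) ∣ α ⟨2 * l, h2l⟩ := by
      rw [even_iff_two_dvd] at hα
      have hs : (2 : ℤ) ∣ ∑ i : Fin l,
          α ⟨2 * i.val, by have := i.isLt; omega⟩ *
          α ⟨2 * i.val + 1, by have := i.isLt; omega⟩ :=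
        Finset.dvd_sum (fun i _ => Dvd.dvd.mul_right (heven i.val i.isLt) _)
      obtain ⟨a, ha⟩ := hα
      obtain ⟨b, hb⟩ := hs
      omega
    intro i hi
    rcases Nat.even_or_odd i.val with ⟨k, hk⟩ | ⟨k, hk⟩
    · by_cases hkl : k < l
      · have := heven k hkl
        have hieq : i = ⟨2 * k, by omega⟩ := by apply Fin.ext; show i.val = 2 * k; omega
        rwa [hieq]
      · have hieq : i = ⟨2 * l, h2l⟩ := by apply Fin.ext; show i.val = 2 * l; omega
        rwa [hieq]
    · have hkl : k < l := by omega
      have := hodd k hkl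
      have hieq : i = ⟨2 * k + 1, by omega⟩ := by apply Fin.ext; show i.val = 2 * k + 1; omega
      rwa [hieq]
  · intro hdvd
    have hmem : Even (α ⟨2 * l, h2l⟩ + ∑ i : Fin l,
        α ⟨2 * i.val, by have := i.isLt; omega⟩ *
        α ⟨2 * i.val + 1, by have := i.isLt; omega⟩) := by
      rw [even_iff_two_dvd]
      exact dvd_add (hdvd _ (by simp; try omega))
        (Finset.dvd_sum (fun i _ => Dvd.dvd.mul_right
          (hdvd ⟨2 * i.val, by have := i.isLt; omega⟩ (by have := i.isLt; simp; try omega)) _))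
    refine ⟨hmem, fun σ hσ => ?_⟩
    simp only [Pi.add_apply]
    have hkey : ∑ i : Fin l,
        (α ⟨2 * i.val, by have := i.isLt; omega⟩ + σ ⟨2 * i.val, by have := i.isLt; omega⟩) *
        (α ⟨2 * i.val + 1, by have := i.isLt; omega⟩ + σ ⟨2 * i.val + 1, by have := i.isLt; omega⟩)
        = (∑ i : Fin l,
            σ ⟨2 * i.val, by have := i.isLt; omega⟩ *
            σ ⟨2 * i.val + 1, by have := i.isLt; omega⟩)
          + ∑ i : Fin l,
            (α ⟨2 * i.val, by have := i.isLt; omega⟩ * α ⟨2 * i.val + 1, by have := i.isLt; omega⟩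
            + α ⟨2 * i.val, by have := i.isLt; omega⟩ * σ ⟨2 * i.val + 1, by have := i.isLt; omega⟩
            + σ ⟨2 * i.val, by have := i.isLt; omega⟩ * α ⟨2 * i.val + 1, by have := i.isLt; omega⟩) := by
      rw [← Finset.sum_add_distrib]
      exact Finset.sum_congr rfl (fun i _ => by ring)
    rw [hkey]
    rw [even_iff_two_dvd] at hσ ⊢
    have hda : ∀ i : Fin l, (2 : ℤ) ∣ α ⟨2 * i.val, by have := i.isLt; omega⟩ :=
      fun i => hdvd _ (by have := i.isLt; simp; try omega)
    have hdb : ∀ i : Fin l, (2 : ℤ) ∣ α ⟨2 * i.val + 1, by have := i.isLt; omega⟩ :=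
      fun i => hdvd _ (by have := i.isLt; simp; try omega)
    have hrest : (2 : ℤ) ∣ α ⟨2 * l, h2l⟩ + ∑ i : Fin l,
        (α ⟨2 * i.val, by have := i.isLt; omega⟩ * α ⟨2 * i.val + 1, by have := i.isLt; omega⟩
        + α ⟨2 * i.val, by have := i.isLt; omega⟩ * σ ⟨2 * i.val + 1, by have := i.isLt; omega⟩
        + σ ⟨2 * i.val, by have := i.isLt; omega⟩ * α ⟨2 * i.val + 1, by have := i.isLt; omega⟩) :=
      dvd_add (hdvd _ (by simp; try omega))
        (Finset.dvd_sum (fun i _ => dvd_add (dvd_add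
          (Dvd.dvd.mul_right (hda i) _) (Dvd.dvd.mul_right (hda i) _))
          (Dvd.dvd.mul_left (hdb i) _)))
    obtain ⟨a, ha⟩ := hσ
    obtain ⟨b, hb⟩ := hrest
    obtain ⟨c, hc⟩ : ∃ c, α ⟨2 * l, h2l⟩ + σ ⟨2 * l, h2l⟩ +
        ((∑ i : Fin l,
            σ ⟨2 * i.val, by have := i.isLt; omega⟩ *
            σ ⟨2 * i.val + 1, by have := i.isLt; omega⟩)
          + ∑ i : Fin l,
            (α ⟨2 * i.val, by have := i.isLt; omega⟩ * α ⟨2 * i.val + 1, by have := i.isLt; omega⟩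
            + α ⟨2 * i.val, by have := i.isLt; omega⟩ * σ ⟨2 * i.val + 1, by have := i.isLt; omega⟩
            + σ ⟨2 * i.val, by have := i.isLt; omega⟩ * α ⟨2 * i.val + 1, by have := i.isLt; omega⟩))
        = 2 * c := ⟨a + b, by omega⟩
    exact ⟨c, by omega⟩
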